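/- For every impartial game G, applying the pass operator twice returns a game equal to G: (G*)* = G, i.e., (G*)* + G is a P-position. -/

import Mathlib

/-- Finite impartial games, given by their (finite list of) options. -/
inductive IGame : Type where
  | mk : List IGame → IGame

/-- The empty game `E`, with no options. -/
abbrev E : IGame := .mk []

/-- The list of options of a game. -/
def IGame.opts : IGame → List IGame
  | .mk l => l

theorem IGame.sizeOf_lt_of_mem {g : IGame} {l : List IGame} (h : g ∈ l) :
    sizeOf g < sizeOf (IGame.mk l) := by
  have := List.sizeOf_lt_of_mem h
  simp only [IGame.mk.sizeOf_spec]; omega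

/-- The pass operator: `E* = E`; for `G` with options, `G*` has options
`G` together with `g*` for each option `g` of `G`. -/
def pass : IGame → IGame
  | .mk [] => .mk []
  | .mk l => .mk (.mk l :: l.attach.map fun g => pass g.1)
decreasing_by
  exact IGame.sizeOf_lt_of_mem g.2

/-- The split sum `G ∘ H`. -/
def split : IGame → IGame → IGame
  | .mk [], _ => .mk []
  | .mk gs, .mk [] => .mk gs
  | .mk gs, .mk hs =>
      .mk ((hs.attach.map fun h => split (.mk gs) h.1) ++
           (gs.attach.map fun g => split g.1 (.mk hs)))
termination_by G H => sizeOf G + sizeOf H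
decreasing_by
  · have := IGame.sizeOf_lt_of_mem h.2; omega
  · have := IGame.sizeOf_lt_of_mem g.2; omega

/-- Disjunctive sum of games. -/
def addG : IGame → IGame → IGame
  | .mk gs, .mk hs =>
      .mk ((gs.attach.map fun g => addG g.1 (.mk hs)) ++
           (hs.attach.map fun h => addG (.mk gs) h.1))
termination_by G H => sizeOf G + sizeOf H
decreasing_by
  · have := IGame.sizeOf_lt_of_mem g.2; omega
  · have := IGame.sizeOf_lt_of_mem h.2; omega

/-- The nimber `*n`, with options `*0, …, *(n-1)`. -/
def star : ℕ → IGame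
  | n => .mk ((List.range n).attach.map fun k => star k.1)
termination_by n => n
decreasing_by have := List.mem_range.mp k.2; omega

/-- `G` is a P-position (previous player wins under normal play):
every option is an N-position. -/
def PPos : IGame → Prop
  | .mk l => ∀ g ∈ l.attach, ¬ PPos g.1
decreasing_by exact IGame.sizeOf_lt_of_mem g.2

/-- Identity of game trees (extensionally: same set of options, recursively). -/
def Ident : IGame → IGame → Prop
  | .mk gs, .mk hs =>
      (∀ g ∈ gs.attach, ∃ h ∈ hs.attach, Ident g.1 h.1) ∧
      (∀ h ∈ hs.attach, ∃ g ∈ gs.attach, Ident g.1 h.1)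
termination_by G H => sizeOf G + sizeOf H
decreasing_by
  · have := IGame.sizeOf_lt_of_mem g.2
    have := IGame.sizeOf_lt_of_mem h.2; omega
  · have := IGame.sizeOf_lt_of_mem g.2
    have := IGame.sizeOf_lt_of_mem h.2; omega


/-! ### Auxiliary lemmas -/

theorem PPos_mk (l : List IGame) : PPos (.mk l) ↔ ∀ g ∈ l, ¬ PPos g := by
  rw [PPos]; simp

theorem NPos_mk (l : List IGame) : ¬ PPos (.mk l) ↔ ∃ g ∈ l, PPos g := by
  rw [PPos_mk]; push_neg; rfl

theorem addG_mk (gs hs : List IGame) :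
    addG (.mk gs) (.mk hs)
      = .mk (gs.map (addG · (.mk hs)) ++ hs.map (addG (.mk gs) ·)) := by
  rw [addG]; simp [List.attach_map_val]

theorem pass_nil : _root_.pass E = E := by rw [_root_.pass]

theorem pass_cons (a : IGame) (l : List IGame) :
    _root_.pass (.mk (a :: l)) = .mk (.mk (a :: l) :: (a :: l).map _root_.pass) := by
  rw [_root_.pass]
  · congr 1
    simp [List.attach, List.attachWith, List.map_pmap]
  · simp

theorem NPos_addG_left {g : IGame} (gs hs : List IGame) (hg : g ∈ gs)
    (hP : PPos (addG g (.mk hs))) : ¬ PPos (addG (.mk gs) (.mk hs)) := by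
  rw [addG_mk, NPos_mk]
  exact ⟨addG g (.mk hs), List.mem_append.mpr (Or.inl (List.mem_map.mpr ⟨g, hg, rfl⟩)), hP⟩

theorem NPos_addG_right {h : IGame} (gs hs : List IGame) (hh : h ∈ hs)
    (hP : PPos (addG (.mk gs) h)) : ¬ PPos (addG (.mk gs) (.mk hs)) := by
  rw [addG_mk, NPos_mk]
  exact ⟨addG (.mk gs) h, List.mem_append.mpr (Or.inr (List.mem_map.mpr ⟨h, hh, rfl⟩)), hP⟩

theorem add_self : ∀ G : IGame, PPos (addG G G)
  | .mk l => by
    rw [addG_mk, PPos_mk]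
    intro x hx
    rcases List.mem_append.mp hx with hx | hx <;>
      rcases List.mem_map.mp hx with ⟨g, hg, rfl⟩
    · obtain ⟨gs⟩ := g
      exact NPos_addG_right gs l hg (add_self (IGame.mk gs))
    · obtain ⟨gs⟩ := g
      exact NPos_addG_left l gs hg (add_self (IGame.mk gs))
termination_by G => sizeOf G
decreasing_by
  all_goals exact IGame.sizeOf_lt_of_mem hg

theorem ppe : ∀ G : IGame, PPos (addG (_root_.pass (_root_.pass G)) G)
  | .mk [] => by
    rw [pass_nil, pass_nil, addG_mk, PPos_mk]; simp
  | .mk (a :: l) => by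
    have h1 : _root_.pass (.mk (a :: l))
        = .mk (.mk (a :: l) :: (a :: l).map _root_.pass) := pass_cons a l
    have h2 : _root_.pass (_root_.pass (.mk (a :: l)))
        = .mk (_root_.pass (.mk (a :: l)) :: _root_.pass (.mk (a :: l))
              :: ((a :: l).map _root_.pass).map _root_.pass) := by
      conv_lhs => rw [h1, pass_cons]
      simp [h1]
    rw [h2, addG_mk, PPos_mk]
    intro x hx
    rcases List.mem_append.mp hx with hx | hx <;>
      rcases List.mem_map.mp hx with ⟨g, hg, rfl⟩
    · -- move in (G*)*
      simp only [List.mem_cons] at hg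
      rcases hg with rfl | rfl | hg
      · rw [h1]
        exact NPos_addG_left _ _ List.mem_cons_self (add_self _)
      · rw [h1]
        exact NPos_addG_left _ _ List.mem_cons_self (add_self _)
      · -- to g** for g an option of G
        rcases List.mem_map.mp hg with ⟨y, hy, rfl⟩
        rcases List.mem_map.mp hy with ⟨g0, hg0, rfl⟩
        have hP : PPos (addG (_root_.pass (_root_.pass g0)) g0) := ppe g0
        cases hq : _root_.pass (_root_.pass g0) with
        | mk qs =>
          rw [hq] at hP
          exact NPos_addG_right qs (a :: l) hg0 hP
    · -- move in G, to an option g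
      obtain ⟨gs⟩ := g
      have hP : PPos (addG (_root_.pass (_root_.pass (IGame.mk gs))) (IGame.mk gs)) :=
        ppe (IGame.mk gs)
      refine NPos_addG_left _ _ ?_ hP
      exact List.mem_cons.mpr (Or.inr (List.mem_cons.mpr (Or.inr
        (List.mem_map.mpr ⟨_root_.pass (IGame.mk gs),
          List.mem_map.mpr ⟨IGame.mk gs, hg, rfl⟩, rfl⟩))))
termination_by G => sizeOf G
decreasing_by
  all_goals first
    | exact IGame.sizeOf_lt_of_mem hg0
    | exact IGame.sizeOf_lt_of_mem hg

/-- `(G*)* = G`, i.e. `(G*)* + G` is a P-position. -/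
theorem pass_pass_eq (G : IGame) : PPos (addG (pass (pass G)) G) := ppe G
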